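/- Let p be an odd prime, q a power of p, and let k_1 ≥ k_2 > 0 be integers with p ∤ k_1 k_2 not required; let e_1, e_2 ∈ {−1, 1} and h_1, h_2 integers with p ∤ h_1 h_2. Define T = Σ over m with m | gcd(k_1, k_2), mp ∤ k_1, mp ∤ k_2, and mp | (e_1 h_1 k_1 + e_2 h_2 k_2), of E(m) π(m) m^2, where π(m) is the number of monic irreducible polynomials of degree m over F_q and E(m) is any function with E(m) = 1 + O(m q^{−m}) and 0 ≤ E(m) ≤ 1. Then: if k_1 = k_2 and p | (e_1 h_1 + e_2 h_2), T = E(k_1) k_1 q^{k_1} + O(k_1 q^{k_1/2}); if k_1 = k_2 and p ∤ (e_1 h_1 + e_2 h_2), T = 0; if k_1 = 2 k_2, T = O(k_1 q^{k_1/2}); otherwise T = O(k_1 q^{k_1/3}). -/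

import Mathlib

open Polynomial

/-- The number of monic irreducible polynomials of degree `m` over `K`. -/
noncomputable def monicIrreducibleCount (K : Type) [Field K] [Fintype K] (m : ℕ) : ℕ :=
  Nat.card {P : K[X] // P.Monic ∧ Irreducible P ∧ P.natDegree = m}

namespace ESEAux
set_option linter.unusedSectionVars false

variable {K : Type} [Field K] [Fintype K]

local notation "Ω" => AlgebraicClosure K
local notation "q" => Fintype.card K

lemma isInt (x : Ω) : IsIntegral K x :=
  IsAlgebraic.isIntegral (Algebra.IsAlgebraic.isAlgebraic x)

variable (K) in
noncomputable def FF (n : ℕ) : Finset (AlgebraicClosure K) :=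
  Set.toFinset (rootSet (X ^ q ^ n - X : K[X]) Ω)

lemma G_ne_zero {n : ℕ} (hn : n ≠ 0) : (X ^ q ^ n - X : K[X]) ≠ 0 :=
  FiniteField.X_pow_card_pow_sub_X_ne_zero K hn Fintype.one_lt_card

lemma mem_FF {n : ℕ} (hn : n ≠ 0) {x : Ω} : x ∈ FF K n ↔ x ^ q ^ n = x := by
  rw [FF, Set.mem_toFinset, mem_rootSet]
  constructor
  · rintro ⟨-, h⟩
    simpa [sub_eq_zero] using h
  · intro h
    refine ⟨G_ne_zero hn, ?_⟩
    simpa [sub_eq_zero] using h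

lemma charP_eq {p a : ℕ} (hp : p.Prime) (ha : a ≠ 0) (hK : Fintype.card K = p ^ a) :
    CharP K p := by
  obtain ⟨n, hr, hcard⟩ := FiniteField.card K (ringChar K)
  have : ringChar K = p := by
    have hdvd : p ∣ ringChar K ^ (n : ℕ) := by
      rw [← hcard, hK]
      exact dvd_pow_self p ha
    have := hp.dvd_of_dvd_pow hdvd
    exact ((Nat.prime_dvd_prime_iff_eq hp hr).mp this).symm
  rw [← this]
  exact ringChar.charP K

lemma card_FF {p a : ℕ} (hp : p.Prime) (ha : a ≠ 0) (hK : Fintype.card K = p ^ a)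
    {n : ℕ} (hn : n ≠ 0) : (FF K n).card = q ^ n := by
  haveI : CharP K p := charP_eq hp ha hK
  have hsep : (X ^ q ^ n - X : K[X]).Separable := by
    apply galois_poly_separable p
    rw [hK]
    exact dvd_pow (dvd_pow_self p ha) hn
  have hsplit : Splits ((X ^ q ^ n - X : K[X]).map (algebraMap K Ω)) :=
    IsAlgClosed.splits _
  have := card_rootSet_eq_natDegree hsep hsplit
  rw [FF, Set.toFinset_card, this,
    FiniteField.X_pow_card_pow_sub_X_natDegree_eq K hn Fintype.one_lt_card]

/-- Every element with minimal polynomial of degree `d` satisfies `x^(q^d) = x`. -/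
lemma pow_minpoly (x : Ω) : x ^ q ^ (minpoly K x).natDegree = x := by
  have hx := isInt x
  haveI := IntermediateField.adjoin.finiteDimensional hx
  set E := IntermediateField.adjoin K ({x} : Set Ω)
  haveI : Finite E := Module.finite_of_finite K
  haveI : Fintype E := Fintype.ofFinite E
  have hcard : Fintype.card E = q ^ (minpoly K x).natDegree := by
    rw [Module.card_eq_pow_finrank (K := K) (V := E), IntermediateField.adjoin.finrank hx]
  have hgen := FiniteField.pow_card (IntermediateField.AdjoinSimple.gen K x)
  rw [hcard] at hgen
  have := congrArg (algebraMap E Ω) hgen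
  rwa [map_pow, IntermediateField.AdjoinSimple.algebraMap_gen] at this

lemma pow_mul_fix {x : Ω} {d : ℕ} (hd : x ^ q ^ d = x) (c : ℕ) : x ^ q ^ (d * c) = x := by
  induction c with
  | zero => simp
  | succ c ih =>
      rw [Nat.mul_succ, pow_add, pow_mul, ih, hd]

lemma pow_of_dvd (x : Ω) {n : ℕ} (h : (minpoly K x).natDegree ∣ n) : x ^ q ^ n = x := by
  obtain ⟨c, rfl⟩ := h
  exact pow_mul_fix (pow_minpoly x) c


section Frob
variable {p a : ℕ} (hp : p.Prime) (ha : a ≠ 0) (hK : Fintype.card K = p ^ a)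

/-- The fixed field of the `q^n`-power Frobenius inside `Ω`. -/
noncomputable def frobField (n : ℕ) : IntermediateField K Ω where
  carrier := {y : Ω | y ^ q ^ n = y}
  mul_mem' := by
    intro x y hx hy
    simp only [Set.mem_setOf_eq] at *
    rw [mul_pow, hx, hy]
  one_mem' := one_pow _
  add_mem' := by
    intro x y hx hy
    haveI : CharP K p := charP_eq hp ha hK
    haveI : Fact p.Prime := ⟨hp⟩
    haveI : CharP Ω p := charP_of_injective_algebraMap (algebraMap K Ω).injective p
    simp only [Set.mem_setOf_eq] at *
    have hq : q ^ n = p ^ (a * n) := by rw [hK, ← pow_mul]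
    rw [hq, add_pow_char_pow, ← hq, hx, hy]
  zero_mem' := by
    simp only [Set.mem_setOf_eq]
    exact zero_pow (by positivity)
  algebraMap_mem' := by
    intro r
    simp only [Set.mem_setOf_eq, ← map_pow]
    rw [FiniteField.pow_card_pow]
  inv_mem' := by
    intro x hx
    simp only [Set.mem_setOf_eq] at *
    rw [inv_pow, hx]

lemma mem_frobField {n : ℕ} {x : Ω} : x ∈ frobField hp ha hK n ↔ x ^ q ^ n = x := Iff.rfl

include hp ha hK in
lemma minpoly_natDegree_dvd {n : ℕ} (hn : n ≠ 0) {x : Ω} (hx : x ^ q ^ n = x) :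
    (minpoly K x).natDegree ∣ n := by
  set S := frobField hp ha hK n with hS
  haveI : Finite S := by
    have hfin : ({y : Ω | y ^ q ^ n = y}).Finite := by
      have : ({y : Ω | y ^ q ^ n = y}) ⊆ {y : Ω | IsRoot (X ^ q ^ n - X : Polynomial Ω) y} := by
        intro y hy
        simp only [Set.mem_setOf_eq, IsRoot, eval_sub, eval_pow, eval_X] at *
        rw [hy, sub_self]
      exact Set.Finite.subset (Polynomial.finite_setOf_isRoot
        (FiniteField.X_pow_card_pow_sub_X_ne_zero Ω hn Fintype.one_lt_card)) this
    exact hfin.to_subtype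
  haveI : Fintype S := Fintype.ofFinite S
  haveI : FiniteDimensional K S := (Module.finite_iff_finite (R := K)).mpr inferInstance
  have hcardS : Fintype.card S = q ^ n := by
    have : Nat.card S = Nat.card {y // y ∈ FF K n} := by
      apply Nat.card_congr
      apply Equiv.subtypeEquivRight
      intro y
      rw [mem_FF hn]
      exact Iff.rfl
    rw [Nat.card_eq_fintype_card] at this
    rw [this, Nat.card_eq_finsetCard, card_FF hp ha hK hn]
  have hrank : Module.finrank K S = n := by
    have := Module.card_eq_pow_finrank (K := K) (V := S)
    rw [hcardS] at this
    exact (Nat.pow_right_injective Fintype.one_lt_card this.symm)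
  have hxS : x ∈ S := hx
  have hxint : IsIntegral K (⟨x, hxS⟩ : S) :=
    (isIntegral_algebraMap_iff (algebraMap S Ω).injective).mp (by simpa using isInt x)
  have hdvd := minpoly.degree_dvd (K := K) (L := S) hxint
  have hcoe : (algebraMap S Ω) ⟨x, hxS⟩ = x := rfl
  have hmin : minpoly K x = minpoly K (⟨x, hxS⟩ : S) := by
    have h2 := minpoly.algebraMap_eq (A := K) (B := ↥S) (algebraMap S Ω).injective
      (⟨x, hxS⟩ : S)
    rw [hcoe] at h2
    exact h2
  rwa [← hmin, hrank] at hdvd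

end Frob

open Classical in
lemma card_degree_filter {m : ℕ} (hm : m ≠ 0) :
    ((FF K m).filter (fun x => (minpoly K x).natDegree = m)).card
      = monicIrreducibleCount K m * m := by
  set D := (FF K m).filter (fun x => (minpoly K x).natDegree = m) with hD
  set I := D.image (fun x => minpoly K x) with hI
  have hmem : ∀ P : K[X], (P.Monic ∧ Irreducible P ∧ P.natDegree = m) ↔ P ∈ I := by
    intro P
    constructor
    · rintro ⟨hmon, hirr, hdeg⟩
      have hd0 : P.degree ≠ 0 := fun h =>
        hm (hdeg.symm.trans (natDegree_eq_zero_iff_degree_le_zero.mpr h.le))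
      obtain ⟨z, hz⟩ := IsAlgClosed.exists_aeval_eq_zero Ω P hd0
      have hPmin : P = minpoly K z := minpoly.eq_of_irreducible_of_monic hirr hz hmon
      have hzD : z ∈ D := by
        rw [hD, Finset.mem_filter, mem_FF hm]
        refine ⟨pow_of_dvd z ?_, by rw [← hPmin, hdeg]⟩
        rw [← hPmin, hdeg]
      rw [hI, hPmin]
      exact Finset.mem_image_of_mem _ hzD
    · intro hP
      rw [hI] at hP
      obtain ⟨x, hx, rfl⟩ := Finset.mem_image.mp hP
      rw [hD, Finset.mem_filter] at hx
      exact ⟨minpoly.monic (isInt x), minpoly.irreducible (isInt x), hx.2⟩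
  have hcount : monicIrreducibleCount K m = I.card := by
    rw [monicIrreducibleCount, ← Nat.card_eq_finsetCard I]
    exact Nat.card_congr (Equiv.subtypeEquivRight hmem)
  have hfib : ∀ P ∈ I, (D.filter (fun x => minpoly K x = P)).card = m := by
    intro P hP
    obtain ⟨hmon, hirr, hdeg⟩ := (hmem P).mpr hP
    have hset : D.filter (fun x => minpoly K x = P) = (P.rootSet Ω).toFinset := by
      ext y
      rw [Finset.mem_filter, hD, Finset.mem_filter, Set.mem_toFinset, mem_rootSet]
      constructor
      · rintro ⟨⟨-, -⟩, hyP⟩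
        exact ⟨hmon.ne_zero, by rw [← hyP]; exact minpoly.aeval K y⟩
      · rintro ⟨-, hy⟩
        have hPmin : P = minpoly K y := minpoly.eq_of_irreducible_of_monic hirr hy hmon
        have hdy : (minpoly K y).natDegree = m := by rw [← hPmin, hdeg]
        refine ⟨⟨?_, hdy⟩, hPmin.symm⟩
        rw [mem_FF hm]
        exact pow_of_dvd y (by rw [hdy])
    rw [hset, Set.toFinset_card,
      card_rootSet_eq_natDegree (PerfectField.separable_of_irreducible hirr)
        (IsAlgClosed.splits _), hdeg]
  have := Finset.card_eq_sum_card_fiberwise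
    (f := fun x => minpoly K x) (s := D) (t := I)
    (fun x hx => Finset.mem_image_of_mem _ hx)
  rw [this, Finset.sum_congr rfl hfib, Finset.sum_const, smul_eq_mul, hcount]

lemma countA {p a : ℕ} (hp : p.Prime) (ha : a ≠ 0) (hK : Fintype.card K = p ^ a)
    {m : ℕ} (hm : m ≠ 0) :
    monicIrreducibleCount K m * m ≤ q ^ m := by
  classical
  rw [← card_degree_filter hm, ← card_FF hp ha hK hm]
  exact Finset.card_le_card (Finset.filter_subset _ _)

lemma countB {p a : ℕ} (hp : p.Prime) (ha : a ≠ 0) (hK : Fintype.card K = p ^ a)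
    {m : ℕ} (hm : m ≠ 0) :
    q ^ m ≤ monicIrreducibleCount K m * m + ∑ e ∈ m.properDivisors, q ^ e := by
  classical
  have hsub : FF K m ⊆ ((FF K m).filter (fun x => (minpoly K x).natDegree = m))
      ∪ m.properDivisors.biUnion (fun e => FF K e) := by
    intro x hx
    have hxq : x ^ q ^ m = x := (mem_FF hm).mp hx
    have hdvd : (minpoly K x).natDegree ∣ m := minpoly_natDegree_dvd hp ha hK hm hxq
    rcases eq_or_ne ((minpoly K x).natDegree) m with h | h
    · exact Finset.mem_union_left _ (Finset.mem_filter.mpr ⟨hx, h⟩)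
    · refine Finset.mem_union_right _ (Finset.mem_biUnion.mpr ⟨(minpoly K x).natDegree, ?_, ?_⟩)
      · exact Nat.mem_properDivisors.mpr ⟨hdvd, lt_of_le_of_ne (Nat.le_of_dvd (Nat.pos_of_ne_zero hm) hdvd) h⟩
      · have hd0 : (minpoly K x).natDegree ≠ 0 := (minpoly.natDegree_pos (isInt x)).ne'
        rw [mem_FF hd0]
        exact pow_minpoly x
  calc q ^ m = (FF K m).card := (card_FF hp ha hK hm).symm
    _ ≤ _ := Finset.card_le_card hsub
    _ ≤ ((FF K m).filter (fun x => (minpoly K x).natDegree = m)).card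
          + (m.properDivisors.biUnion (fun e => FF K e)).card := Finset.card_union_le _ _
    _ ≤ monicIrreducibleCount K m * m + ∑ e ∈ m.properDivisors, q ^ e := by
        refine Nat.add_le_add (card_degree_filter hm).le ?_
        refine le_trans (Finset.card_biUnion_le) ?_
        refine Finset.sum_le_sum (fun e he => ?_)
        rw [card_FF hp ha hK (Nat.pos_of_mem_properDivisors he).ne']

lemma geom_bound {c : ℕ} (hc : 3 ≤ c) (M : ℕ) :
    ∑ e ∈ Finset.range (M + 1), (c : ℝ) ^ e ≤ (3 / 2) * (c : ℝ) ^ M := by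
  have hc1 : (1 : ℝ) < c := by exact_mod_cast lt_of_lt_of_le (by norm_num) hc
  have hc3 : (3 : ℝ) ≤ c := by exact_mod_cast hc
  rw [geom_sum_eq (ne_of_gt hc1), div_le_iff₀ (by linarith)]
  have h1 : (1 : ℝ) ≤ (c : ℝ) ^ M := one_le_pow₀ hc1.le
  have h2 : (c : ℝ) ^ (M + 1) = (c : ℝ) ^ M * c := pow_succ _ _
  nlinarith

lemma single_term_bound {p a : ℕ} (hp : p.Prime) (ha : a ≠ 0) (hK : Fintype.card K = p ^ a)
    (E : ℕ → ℝ) (hE01 : ∀ m, 0 ≤ E m ∧ E m ≤ 1) {m M : ℕ} (hm : m ≠ 0) (hmM : m ≤ M) :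
    E m * (monicIrreducibleCount K m : ℝ) * (m : ℝ) ^ 2 ≤ (M : ℝ) * (q : ℝ) ^ m := by
  have h1 : (monicIrreducibleCount K m : ℝ) * m ≤ (q : ℝ) ^ m := by
    have := countA hp ha hK hm
    calc (monicIrreducibleCount K m : ℝ) * m = ((monicIrreducibleCount K m * m : ℕ) : ℝ) := by
          push_cast; ring
      _ ≤ ((q ^ m : ℕ) : ℝ) := by exact_mod_cast this
      _ = (q : ℝ) ^ m := by push_cast; ring
  have hEm := hE01 m
  have hπ : (0 : ℝ) ≤ (monicIrreducibleCount K m : ℝ) := Nat.cast_nonneg _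
  have hm0 : (0 : ℝ) ≤ (m : ℝ) := Nat.cast_nonneg _
  have hmM' : (m : ℝ) ≤ (M : ℝ) := Nat.cast_le.mpr hmM
  have h2 : (monicIrreducibleCount K m : ℝ) * (m : ℝ) ^ 2 ≤ (q : ℝ) ^ m * M := by
    have := mul_le_mul h1 hmM' hm0 (pow_nonneg (Nat.cast_nonneg q) m)
    nlinarith
  calc E m * (monicIrreducibleCount K m : ℝ) * (m : ℝ) ^ 2
      ≤ 1 * ((monicIrreducibleCount K m : ℝ) * (m : ℝ) ^ 2) := by
        rw [mul_assoc]
        exact mul_le_mul_of_nonneg_right hEm.2 (by positivity)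
    _ ≤ (q : ℝ) ^ m * M := by rw [one_mul]; exact h2
    _ = (M : ℝ) * (q : ℝ) ^ m := mul_comm _ _

lemma sum_bound {p a : ℕ} (hp : p.Prime) (ha : a ≠ 0) (hK : Fintype.card K = p ^ a)
    (hq3 : 3 ≤ q) (E : ℕ → ℝ) (hE01 : ∀ m, 0 ≤ E m ∧ E m ≤ 1)
    (S : Finset ℕ) (M : ℕ) (hS : ∀ m ∈ S, m ≠ 0 ∧ m ≤ M) :
    ∑ m ∈ S, E m * (monicIrreducibleCount K m : ℝ) * (m : ℝ) ^ 2
      ≤ (3 / 2) * (M : ℝ) * (q : ℝ) ^ M := by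
  calc ∑ m ∈ S, E m * (monicIrreducibleCount K m : ℝ) * (m : ℝ) ^ 2
      ≤ ∑ m ∈ S, (M : ℝ) * (q : ℝ) ^ m := by
        refine Finset.sum_le_sum (fun m hm => ?_)
        exact single_term_bound hp ha hK E hE01 (hS m hm).1 (hS m hm).2
    _ = (M : ℝ) * ∑ m ∈ S, (q : ℝ) ^ m := by rw [Finset.mul_sum]
    _ ≤ (M : ℝ) * ((3 / 2) * (q : ℝ) ^ M) := by
        refine mul_le_mul_of_nonneg_left ?_ (Nat.cast_nonneg M)
        refine le_trans (Finset.sum_le_sum_of_subset_of_nonneg ?_ ?_) (geom_bound hq3 M)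
        · intro m hm
          exact Finset.mem_range.mpr (Nat.lt_succ_of_le (hS m hm).2)
        · intro m _ _
          positivity
    _ = (3 / 2) * (M : ℝ) * (q : ℝ) ^ M := by ring

lemma properDivisor_le_half {e k : ℕ} (he : e ∈ k.properDivisors) : e ≤ k / 2 := by
  rw [Nat.mem_properDivisors] at he
  obtain ⟨⟨c, rfl⟩, hlt⟩ := he
  have hc2 : 2 ≤ c := by
    by_contra h
    interval_cases c <;> omega
  rw [Nat.le_div_iff_mul_le (by norm_num)]
  nlinarith

lemma pi_close {p a : ℕ} (hp : p.Prime) (ha : a ≠ 0) (hK : Fintype.card K = p ^ a)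
    (hq3 : 3 ≤ q) {k : ℕ} (hk : k ≠ 0) :
    |(monicIrreducibleCount K k : ℝ) * k - (q : ℝ) ^ k| ≤ (3 / 2) * (q : ℝ) ^ (k / 2) := by
  have hA : (monicIrreducibleCount K k : ℝ) * k ≤ (q : ℝ) ^ k := by
    have := countA hp ha hK hk
    calc (monicIrreducibleCount K k : ℝ) * k = ((monicIrreducibleCount K k * k : ℕ) : ℝ) := by
          push_cast; ring
      _ ≤ (q : ℝ) ^ k := by exact_mod_cast this
  have hB : (q : ℝ) ^ k ≤ (monicIrreducibleCount K k : ℝ) * k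
      + ∑ e ∈ k.properDivisors, (q : ℝ) ^ e := by
    have := countB hp ha hK hk
    have := (Nat.cast_le (α := ℝ)).mpr this
    push_cast at this
    convert this using 2
  have hpd : ∑ e ∈ k.properDivisors, (q : ℝ) ^ e ≤ (3 / 2) * (q : ℝ) ^ (k / 2) := by
    refine le_trans (Finset.sum_le_sum_of_subset_of_nonneg ?_ ?_) (geom_bound hq3 (k / 2))
    · intro e he
      exact Finset.mem_range.mpr (Nat.lt_succ_of_le (properDivisor_le_half he))
    · intro m _ _
      positivity
  rw [abs_sub_comm, abs_of_nonneg (by linarith)]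
  linarith

lemma rpow_bridge {c : ℕ} (hc : 3 ≤ c) {M : ℕ} {r : ℝ} (h : (M : ℝ) ≤ r) :
    (c : ℝ) ^ M ≤ (c : ℝ) ^ r := by
  rw [← Real.rpow_natCast]
  exact Real.rpow_le_rpow_of_exponent_le (by exact_mod_cast le_trans (by norm_num) hc) h

lemma term_nonneg (E : ℕ → ℝ) (hE01 : ∀ m, 0 ≤ E m ∧ E m ≤ 1) (m : ℕ) :
    0 ≤ E m * (monicIrreducibleCount K m : ℝ) * (m : ℝ) ^ 2 :=
  mul_nonneg (mul_nonneg (hE01 m).1 (Nat.cast_nonneg _)) (by positivity)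

end ESEAux


open ESEAux in
open Classical in
/-- Estimates for `T = Σ_{m | (k₁,k₂), mp ∤ k₁, k₂, mp | e₁h₁k₁+e₂h₂k₂} E(m) π(m) m²`,
with `π(m)` the count of monic irreducibles of degree `m` over `F_q` and
`E(m) = 1 + O(m q^{−m})`, `0 ≤ E(m) ≤ 1`, uniformly in `k₁ ≥ k₂ > 0`. -/
theorem elementary_sum_estimate (p q : ℕ) (hp : p.Prime) (hodd : Odd p)
    (hq : ∃ a : ℕ, 0 < a ∧ q = p ^ a)
    (K : Type) [Field K] [Fintype K] (hK : Fintype.card K = q)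
    (E : ℕ → ℝ) (hE01 : ∀ m, 0 ≤ E m ∧ E m ≤ 1)
    (CE : ℝ) (hE : ∀ m : ℕ, 1 ≤ m → |E m - 1| ≤ CE * m / (q : ℝ) ^ m) :
    ∃ C : ℝ, 0 < C ∧ ∀ (k₁ k₂ : ℕ) (e₁ e₂ h₁ h₂ : ℤ),
      0 < k₂ → k₂ ≤ k₁ →
      (e₁ = 1 ∨ e₁ = -1) → (e₂ = 1 ∨ e₂ = -1) →
      ¬ (p : ℤ) ∣ h₁ → ¬ (p : ℤ) ∣ h₂ →
      ((k₁ = k₂ → (p : ℤ) ∣ (e₁ * h₁ + e₂ * h₂) →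
          |(∑ m ∈ (Nat.gcd k₁ k₂).divisors.filter (fun m =>
                ¬ m * p ∣ k₁ ∧ ¬ m * p ∣ k₂ ∧
                ((m : ℤ) * p ∣ (e₁ * h₁ * k₁ + e₂ * h₂ * k₂))),
              E m * (monicIrreducibleCount K m : ℝ) * (m : ℝ) ^ 2)
            - E k₁ * k₁ * (q : ℝ) ^ k₁| ≤ C * k₁ * (q : ℝ) ^ ((k₁ : ℝ) / 2)) ∧
        (k₁ = k₂ → ¬ (p : ℤ) ∣ (e₁ * h₁ + e₂ * h₂) →
          (∑ m ∈ (Nat.gcd k₁ k₂).divisors.filter (fun m =>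
                ¬ m * p ∣ k₁ ∧ ¬ m * p ∣ k₂ ∧
                ((m : ℤ) * p ∣ (e₁ * h₁ * k₁ + e₂ * h₂ * k₂))),
              E m * (monicIrreducibleCount K m : ℝ) * (m : ℝ) ^ 2) = 0) ∧
        (k₁ = 2 * k₂ →
          |∑ m ∈ (Nat.gcd k₁ k₂).divisors.filter (fun m =>
                ¬ m * p ∣ k₁ ∧ ¬ m * p ∣ k₂ ∧
                ((m : ℤ) * p ∣ (e₁ * h₁ * k₁ + e₂ * h₂ * k₂))),
              E m * (monicIrreducibleCount K m : ℝ) * (m : ℝ) ^ 2|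
            ≤ C * k₁ * (q : ℝ) ^ ((k₁ : ℝ) / 2)) ∧
        (k₁ ≠ k₂ → k₁ ≠ 2 * k₂ →
          |∑ m ∈ (Nat.gcd k₁ k₂).divisors.filter (fun m =>
                ¬ m * p ∣ k₁ ∧ ¬ m * p ∣ k₂ ∧
                ((m : ℤ) * p ∣ (e₁ * h₁ * k₁ + e₂ * h₂ * k₂))),
              E m * (monicIrreducibleCount K m : ℝ) * (m : ℝ) ^ 2|
            ≤ C * k₁ * (q : ℝ) ^ ((k₁ : ℝ) / 3))) := by
  obtain ⟨a, ha0, hqa⟩ := hq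
  subst hK
  have ha : a ≠ 0 := ha0.ne'
  have hp3 : 3 ≤ p := by
    have h2 := hp.two_le
    by_contra h
    have hp2 : p = 2 := by omega
    rw [hp2] at hodd
    exact (Nat.not_odd_iff_even.mpr (by decide)) hodd
  have hq3 : 3 ≤ Fintype.card K := hqa ▸ le_trans hp3 (Nat.le_self_pow ha p)
  have hq1 : (1 : ℝ) ≤ (Fintype.card K : ℝ) := by exact_mod_cast le_trans (by norm_num) hq3
  refine ⟨4, by norm_num, ?_⟩
  intro k₁ k₂ e₁ e₂ h₁ h₂ hk₂ hk₁₂ he₁ he₂ hh₁ hh₂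
  have hk₁ : 0 < k₁ := lt_of_lt_of_le hk₂ hk₁₂
  refine ⟨?_, ?_, ?_, ?_⟩
  · -- main term case
    intro hkk hdvd
    subst hkk
    rw [Nat.gcd_self]
    set S := k₁.divisors.filter (fun m =>
      ¬ m * p ∣ k₁ ∧ ¬ m * p ∣ k₁ ∧ ((m : ℤ) * p ∣ (e₁ * h₁ * k₁ + e₂ * h₂ * k₁))) with hS
    set f : ℕ → ℝ := fun m => E m * (monicIrreducibleCount K m : ℝ) * (m : ℝ) ^ 2 with hf
    have hnotdvd : ¬ k₁ * p ∣ k₁ := by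
      intro hcon
      have hle := Nat.le_of_dvd hk₁ hcon
      nlinarith [hp.two_le]
    have hk₁S : k₁ ∈ S := by
      rw [hS, Finset.mem_filter, Nat.mem_divisors]
      refine ⟨⟨dvd_rfl, hk₁.ne'⟩, hnotdvd, hnotdvd, ?_⟩
      obtain ⟨t, ht⟩ := hdvd
      exact ⟨t, by push_cast; linear_combination (k₁ : ℤ) * ht⟩
    have hsplit := Finset.add_sum_erase S f hk₁S
    rw [← hsplit]
    have h01 := hE01 k₁
    have hpi := pi_close hp ha hqa hq3 hk₁.ne'
    have hterm : |f k₁ - E k₁ * k₁ * (Fintype.card K : ℝ) ^ k₁|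
        ≤ (k₁ : ℝ) * ((3 / 2) * (Fintype.card K : ℝ) ^ (k₁ / 2)) := by
      have heq : f k₁ - E k₁ * k₁ * (Fintype.card K : ℝ) ^ k₁
          = (E k₁ * k₁) * ((monicIrreducibleCount K k₁ : ℝ) * k₁
              - (Fintype.card K : ℝ) ^ k₁) := by rw [hf]; ring
      rw [heq, abs_mul]
      have habs1 : |E k₁ * (k₁ : ℝ)| ≤ (k₁ : ℝ) := by
        rw [abs_of_nonneg (mul_nonneg h01.1 (Nat.cast_nonneg _))]
        nlinarith [h01.2, Nat.cast_nonneg (α := ℝ) k₁]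
      exact mul_le_mul habs1 hpi (abs_nonneg _) (Nat.cast_nonneg k₁)
    have herase_mem : ∀ m ∈ S.erase k₁, m ≠ 0 ∧ m ≤ k₁ / 2 := by
      intro m hm
      rw [Finset.mem_erase, hS, Finset.mem_filter, Nat.mem_divisors] at hm
      obtain ⟨hne, ⟨⟨hdvd', h0⟩, -⟩⟩ := hm
      have hm0 : m ≠ 0 := by rintro rfl; exact h0 (zero_dvd_iff.mp hdvd')
      exact ⟨hm0, properDivisor_le_half (Nat.mem_properDivisors.mpr
        ⟨hdvd', lt_of_le_of_ne (Nat.le_of_dvd hk₁ hdvd') hne⟩)⟩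
    have herase : ∑ m ∈ S.erase k₁, f m
        ≤ (3 / 2) * ((k₁ / 2 : ℕ) : ℝ) * (Fintype.card K : ℝ) ^ (k₁ / 2) :=
      sum_bound hp ha hqa hq3 E hE01 _ _ herase_mem
    have herase0 : 0 ≤ ∑ m ∈ S.erase k₁, f m :=
      Finset.sum_nonneg fun m _ => term_nonneg E hE01 m
    have hhalf : (((k₁ / 2 : ℕ) : ℕ) : ℝ) ≤ (k₁ : ℝ) / 2 := Nat.cast_div_le
    have hbr : (Fintype.card K : ℝ) ^ (k₁ / 2) ≤ (Fintype.card K : ℝ) ^ ((k₁ : ℝ) / 2) :=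
      rpow_bridge hq3 hhalf
    have hk2le : (((k₁ / 2 : ℕ) : ℕ) : ℝ) ≤ (k₁ : ℝ) := by
      have : (k₁ / 2 : ℕ) ≤ k₁ := Nat.div_le_self _ _
      exact_mod_cast this
    have htri : |f k₁ + ∑ m ∈ S.erase k₁, f m - E k₁ * k₁ * (Fintype.card K : ℝ) ^ k₁|
        ≤ |f k₁ - E k₁ * k₁ * (Fintype.card K : ℝ) ^ k₁| + ∑ m ∈ S.erase k₁, f m := by
      have := abs_add_le (f k₁ - E k₁ * k₁ * (Fintype.card K : ℝ) ^ k₁)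
        (∑ m ∈ S.erase k₁, f m)
      rw [abs_of_nonneg herase0] at this
      calc |f k₁ + ∑ m ∈ S.erase k₁, f m - E k₁ * k₁ * (Fintype.card K : ℝ) ^ k₁|
          = |(f k₁ - E k₁ * k₁ * (Fintype.card K : ℝ) ^ k₁) + ∑ m ∈ S.erase k₁, f m| := by
            congr 1
            ring
        _ ≤ _ := this
    have hpow0 : (0 : ℝ) ≤ (Fintype.card K : ℝ) ^ (k₁ / 2) := by positivity
    have hk₁0 : (0 : ℝ) ≤ (k₁ : ℝ) := Nat.cast_nonneg _
    calc |f k₁ + ∑ m ∈ S.erase k₁, f m - E k₁ * k₁ * (Fintype.card K : ℝ) ^ k₁|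
        ≤ (k₁ : ℝ) * ((3 / 2) * (Fintype.card K : ℝ) ^ (k₁ / 2))
          + (3 / 2) * ((k₁ / 2 : ℕ) : ℝ) * (Fintype.card K : ℝ) ^ (k₁ / 2) := by
          have := htri
          linarith [hterm, herase]
      _ ≤ 3 * (k₁ : ℝ) * (Fintype.card K : ℝ) ^ (k₁ / 2) := by nlinarith [hk2le, hpow0, hk₁0]
      _ ≤ 4 * (k₁ : ℝ) * (Fintype.card K : ℝ) ^ ((k₁ : ℝ) / 2) := by
          have h3 : 3 * (k₁ : ℝ) * (Fintype.card K : ℝ) ^ (k₁ / 2)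
              ≤ 3 * (k₁ : ℝ) * (Fintype.card K : ℝ) ^ ((k₁ : ℝ) / 2) := by
            apply mul_le_mul_of_nonneg_left hbr (by positivity)
          have hr0 : (0 : ℝ) ≤ (Fintype.card K : ℝ) ^ ((k₁ : ℝ) / 2) :=
            Real.rpow_nonneg (Nat.cast_nonneg _) _
          nlinarith
  · -- vanishing case
    intro hkk hndvd
    subst hkk
    apply Finset.sum_eq_zero
    intro m hm
    exfalso
    rw [Finset.mem_filter, Nat.mem_divisors, Nat.gcd_self] at hm
    obtain ⟨⟨hmdvd, h0⟩, hnp1, -, hdvdZ⟩ := hm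
    have hm0 : m ≠ 0 := by
      rintro rfl
      exact h0 (zero_dvd_iff.mp hmdvd)
    obtain ⟨t, ht⟩ := hmdvd
    have hmZ : (m : ℤ) ≠ 0 := Int.natCast_ne_zero.mpr hm0
    have h6 : (p : ℤ) ∣ (e₁ * h₁ + e₂ * h₂) * t := by
      have h7 : (e₁ * h₁ * (k₁ : ℤ) + e₂ * h₂ * (k₁ : ℤ))
          = (m : ℤ) * ((e₁ * h₁ + e₂ * h₂) * t) := by
        push_cast [ht]; ring
      rw [h7] at hdvdZ
      exact (mul_dvd_mul_iff_left hmZ).mp hdvdZ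
    have hpZ : Prime (p : ℤ) := Nat.prime_iff_prime_int.mp hp
    rcases hpZ.dvd_mul.mp h6 with h | h
    · exact hndvd h
    · obtain ⟨s, hs⟩ := h
      apply hnp1
      have : ((m * p : ℕ) : ℤ) ∣ (k₁ : ℤ) := ⟨s, by push_cast [ht, hs]; ring⟩
      exact_mod_cast this
  · -- k₁ = 2 k₂
    intro h2k
    set S := (Nat.gcd k₁ k₂).divisors.filter (fun m =>
      ¬ m * p ∣ k₁ ∧ ¬ m * p ∣ k₂ ∧ ((m : ℤ) * p ∣ (e₁ * h₁ * k₁ + e₂ * h₂ * k₂))) with hS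
    have hmem : ∀ m ∈ S, m ≠ 0 ∧ m ≤ k₂ := by
      intro m hm
      rw [hS, Finset.mem_filter, Nat.mem_divisors] at hm
      obtain ⟨⟨hmdvd, h0⟩, -⟩ := hm
      have hm0 : m ≠ 0 := by rintro rfl; exact h0 (zero_dvd_iff.mp hmdvd)
      exact ⟨hm0, Nat.le_of_dvd hk₂ (hmdvd.trans (Nat.gcd_dvd_right _ _))⟩
    have hsum := sum_bound hp ha hqa hq3 E hE01 S k₂ hmem
    rw [abs_of_nonneg (Finset.sum_nonneg fun m _ => term_nonneg E hE01 m)]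
    have hhalf : ((k₂ : ℕ) : ℝ) ≤ (k₁ : ℝ) / 2 := by
      rw [h2k]; push_cast; linarith
    have hbr : (Fintype.card K : ℝ) ^ k₂ ≤ (Fintype.card K : ℝ) ^ ((k₁ : ℝ) / 2) :=
      rpow_bridge hq3 hhalf
    have hk2k1 : (k₂ : ℝ) ≤ (k₁ : ℝ) := Nat.cast_le.mpr hk₁₂
    have hq0 : (0 : ℝ) ≤ (Fintype.card K : ℝ) ^ k₂ := by positivity
    have hr0 : (0 : ℝ) ≤ (Fintype.card K : ℝ) ^ ((k₁ : ℝ) / 2) :=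
      Real.rpow_nonneg (Nat.cast_nonneg _) _
    have hk₂0 : (0 : ℝ) ≤ (k₂ : ℝ) := Nat.cast_nonneg _
    nlinarith
  · -- generic case
    intro hne hne2
    set S := (Nat.gcd k₁ k₂).divisors.filter (fun m =>
      ¬ m * p ∣ k₁ ∧ ¬ m * p ∣ k₂ ∧ ((m : ℤ) * p ∣ (e₁ * h₁ * k₁ + e₂ * h₂ * k₂))) with hS
    have hmem : ∀ m ∈ S, m ≠ 0 ∧ m ≤ k₁ / 3 := by
      intro m hm
      rw [hS, Finset.mem_filter, Nat.mem_divisors] at hm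
      obtain ⟨⟨hmdvd, h0⟩, -⟩ := hm
      have hm0 : m ≠ 0 := by rintro rfl; exact h0 (zero_dvd_iff.mp hmdvd)
      refine ⟨hm0, ?_⟩
      have hd1 : m ∣ k₁ := hmdvd.trans (Nat.gcd_dvd_left _ _)
      have hd2 : m ∣ k₂ := hmdvd.trans (Nat.gcd_dvd_right _ _)
      have hmk₂ : m ≤ k₂ := Nat.le_of_dvd hk₂ hd2
      have h3m : 3 * m ≤ k₁ := by
        obtain ⟨c, hc⟩ := hd1
        obtain ⟨d, hd⟩ := hd2
        have hd' : 1 ≤ d := by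
          rcases Nat.eq_zero_or_pos d with rfl | h
          · omega
          · exact h
        rcases c with _ | _ | _ | c
        · omega
        · -- c = 1 : k₁ = m, so k₂ = k₁
          exfalso
          apply hne
          omega
        · -- c = 2 : k₁ = 2m
          exfalso
          have hdle : d ≤ 2 := by nlinarith
          interval_cases d
          · exact hne2 (by omega)
          · exact hne (by omega)
        · -- c ≥ 3
          nlinarith
      omega
    have hsum := sum_bound hp ha hqa hq3 E hE01 S (k₁ / 3) hmem
    rw [abs_of_nonneg (Finset.sum_nonneg fun m _ => term_nonneg E hE01 m)]
    have hthird : (((k₁ / 3 : ℕ) : ℕ) : ℝ) ≤ (k₁ : ℝ) / 3 := Nat.cast_div_le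
    have hbr : (Fintype.card K : ℝ) ^ (k₁ / 3) ≤ (Fintype.card K : ℝ) ^ ((k₁ : ℝ) / 3) :=
      rpow_bridge hq3 hthird
    have hk3k1 : (((k₁ / 3 : ℕ) : ℕ) : ℝ) ≤ (k₁ : ℝ) := by
      have : (k₁ / 3 : ℕ) ≤ k₁ := Nat.div_le_self _ _
      exact_mod_cast this
    have hq0 : (0 : ℝ) ≤ (Fintype.card K : ℝ) ^ (k₁ / 3) := by positivity
    have hr0 : (0 : ℝ) ≤ (Fintype.card K : ℝ) ^ ((k₁ : ℝ) / 3) :=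
      Real.rpow_nonneg (Nat.cast_nonneg _) _
    have hM0 : (0 : ℝ) ≤ (((k₁ / 3 : ℕ) : ℕ) : ℝ) := Nat.cast_nonneg _
    nlinarith
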